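/- (Unconfoundedness transfers to the propensity score.) Let (Ω, ℱ, P) be a probability space, X : Ω → ℝ^p a random vector, T : Ω → {0, 1} a random variable, π : ℝ^p → [0, 1] measurable with E[T | σ(X)] = π(X) almost surely, and let Y(1), Y(0) be integrable real random variables (the potential outcomes). Assume unconfoundedness given X: the pair (Y(1), Y(0)) and T are conditionally independent given σ(X). Then (Y(1), Y(0)) and T are conditionally independent given σ(π(X)). -/

import Mathlib

open MeasureTheory ProbabilityTheory

/-- unconfoundedness transfers to the propensity score.
If `E[T | σ(X)] = π(X)` a.s. and the potential outcomes `(Y(1), Y(0))` are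
conditionally independent of `T` given `σ(X)` (in the sense that, for all bounded
measurable `f, g`, `E[f(Y(1),Y(0)) g(T) | σ(X)] = E[f(Y(1),Y(0)) | σ(X)] E[g(T) | σ(X)]`
a.s.), then `(Y(1), Y(0))` and `T` are conditionally independent given `σ(π(X))`. -/
theorem unconfoundedness_transfers_to_propensity_score
    {Ω : Type*} [MeasurableSpace Ω] (μ : Measure Ω) [IsProbabilityMeasure μ]
    (p : ℕ) (X : Ω → Fin p → ℝ) (T : Ω → ℝ) (Y1 Y0 : Ω → ℝ)
    (hX : Measurable X) (hT : Measurable T)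
    (hY1 : Measurable Y1) (hY0 : Measurable Y0)
    (hT01 : ∀ ω, T ω = 0 ∨ T ω = 1)
    (hY1int : Integrable Y1 μ) (hY0int : Integrable Y0 μ)
    (π : (Fin p → ℝ) → ℝ) (hπ : Measurable π)
    (hπ01 : ∀ v, π v ∈ Set.Icc (0 : ℝ) 1)
    (hprop : μ[T | MeasurableSpace.comap X inferInstance] =ᵐ[μ] fun ω => π (X ω))
    (hunconf : ∀ (f : ℝ × ℝ → ℝ) (g : ℝ → ℝ), Measurable f → Measurable g →
      (∃ Cf : ℝ, ∀ v, |f v| ≤ Cf) → (∃ Cg : ℝ, ∀ v, |g v| ≤ Cg) →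
      μ[fun ω => f (Y1 ω, Y0 ω) * g (T ω) | MeasurableSpace.comap X inferInstance]
        =ᵐ[μ]
      fun ω =>
        (μ[fun ω => f (Y1 ω, Y0 ω) | MeasurableSpace.comap X inferInstance]) ω *
        (μ[fun ω => g (T ω) | MeasurableSpace.comap X inferInstance]) ω) :
    ∀ (f : ℝ × ℝ → ℝ) (g : ℝ → ℝ), Measurable f → Measurable g →
      (∃ Cf : ℝ, ∀ v, |f v| ≤ Cf) → (∃ Cg : ℝ, ∀ v, |g v| ≤ Cg) →
      μ[fun ω => f (Y1 ω, Y0 ω) * g (T ω) |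
          MeasurableSpace.comap (fun ω => π (X ω)) inferInstance]
        =ᵐ[μ]
      fun ω =>
        (μ[fun ω => f (Y1 ω, Y0 ω) |
            MeasurableSpace.comap (fun ω => π (X ω)) inferInstance]) ω *
        (μ[fun ω => g (T ω) |
            MeasurableSpace.comap (fun ω => π (X ω)) inferInstance]) ω := by
  intro f g hf hg hfb hgb
  obtain ⟨Cf, hCf⟩ := hfb
  obtain ⟨Cg, hCg⟩ := hgb
  -- facts proved with the ambient instance, before abbreviating the σ-algebras
  have hm2 : MeasurableSpace.comap X inferInstance ≤ ‹MeasurableSpace Ω› := hX.comap_le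
  have hm12 : MeasurableSpace.comap (fun ω => π (X ω)) inferInstance
      ≤ MeasurableSpace.comap X inferInstance := by
    rw [show (fun ω => π (X ω)) = π ∘ X from rfl, ← MeasurableSpace.comap_comp]
    exact MeasurableSpace.comap_mono hπ.comap_le
  have hFmeas : Measurable fun ω => f (Y1 ω, Y0 ω) := hf.comp (hY1.prodMk hY0)
  have hGmeas : Measurable fun ω => g (T ω) := hg.comp hT
  have intF : Integrable (fun ω => f (Y1 ω, Y0 ω)) μ :=
    ⟨hFmeas.aestronglyMeasurable, HasFiniteIntegral.of_bounded
      (ae_of_all μ fun ω => by simpa [Real.norm_eq_abs] using hCf (Y1 ω, Y0 ω))⟩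
  have intG : Integrable (fun ω => g (T ω)) μ :=
    ⟨hGmeas.aestronglyMeasurable, HasFiniteIntegral.of_bounded
      (ae_of_all μ fun ω => by simpa [Real.norm_eq_abs] using hCg (T ω))⟩
  have intFG : Integrable (fun ω => f (Y1 ω, Y0 ω) * g (T ω)) μ :=
    intG.bdd_mul hFmeas.aestronglyMeasurable (c := Cf) (ae_of_all μ fun ω => by
      simpa [Real.norm_eq_abs] using hCf (Y1 ω, Y0 ω))
  have intT : Integrable T μ :=
    ⟨hT.aestronglyMeasurable, HasFiniteIntegral.of_bounded (C := 1)
      (ae_of_all μ fun ω => by rcases hT01 ω with h | h <;> simp [h])⟩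
  have hHbound : ∀ ω, ‖g 0 + (g 1 - g 0) * π (X ω)‖ ≤ |g 0| + |g 1 - g 0| := by
    intro ω
    have h01 := hπ01 (X ω)
    have hb : |(g 1 - g 0) * π (X ω)| ≤ |g 1 - g 0| := by
      rw [abs_mul, abs_of_nonneg h01.1]
      exact mul_le_of_le_one_right (abs_nonneg _) h01.2
    calc ‖g 0 + (g 1 - g 0) * π (X ω)‖ ≤ |g 0| + |(g 1 - g 0) * π (X ω)| := by
          simpa [Real.norm_eq_abs] using abs_add_le (g 0) ((g 1 - g 0) * π (X ω))
      _ ≤ |g 0| + |g 1 - g 0| := by linarith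
  have hm1 : MeasurableSpace.comap (fun ω => π (X ω)) inferInstance
      ≤ ‹MeasurableSpace Ω› := hm12.trans hm2
  -- now abbreviate
  set m1 : MeasurableSpace Ω := MeasurableSpace.comap (fun ω => π (X ω)) inferInstance
    with hm1def
  set m2 : MeasurableSpace Ω := MeasurableSpace.comap X inferInstance with hm2def
  set F : Ω → ℝ := fun ω => f (Y1 ω, Y0 ω) with hFdef
  set G : Ω → ℝ := fun ω => g (T ω) with hGdef
  set H : Ω → ℝ := fun ω => g 0 + (g 1 - g 0) * π (X ω) with hHdef
  have hπX1 : Measurable[m1] fun ω => π (X ω) := Measurable.of_comap_le le_rfl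
  have hHm1 : StronglyMeasurable[m1] H :=
    (measurable_const.add (measurable_const.mul hπX1)).stronglyMeasurable
  have intH : Integrable H μ :=
    ⟨(hHm1.mono hm1).aestronglyMeasurable, HasFiniteIntegral.of_bounded
      (ae_of_all μ fun ω => hHbound ω)⟩
  have hGeq : G = (fun _ => g 0) + (g 1 - g 0) • T := by
    funext ω
    rcases hT01 ω with h | h <;> simp [G, h] <;> ring
  have hcondG2 : μ[G|m2] =ᵐ[μ] H := by
    calc μ[G|m2] = μ[(fun _ => g 0) + (g 1 - g 0) • T|m2] := by rw [hGeq]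
      _ =ᵐ[μ] μ[(fun _ : Ω => g 0)|m2] + μ[(g 1 - g 0) • T|m2] :=
          condExp_add (integrable_const _) (intT.smul _) _
      _ =ᵐ[μ] (fun _ => g 0) + (g 1 - g 0) • μ[T|m2] := by
          refine Filter.EventuallyEq.add ?_ (condExp_smul _ _ _)
          rw [condExp_const hm2]
      _ =ᵐ[μ] H := by
          filter_upwards [hprop] with ω hω
          simp [H, hω, smul_eq_mul]
  have hcondG1 : μ[G|m1] =ᵐ[μ] H := by
    calc μ[G|m1] =ᵐ[μ] μ[μ[G|m2]|m1] := (condExp_condExp_of_le hm12 hm2).symm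
      _ =ᵐ[μ] μ[H|m1] := condExp_congr_ae hcondG2
      _ = H := condExp_of_stronglyMeasurable hm1 hHm1 intH
  have hcondF2int : Integrable (fun ω => H ω * (μ[F|m2]) ω) μ :=
    (integrable_condExp).bdd_mul (hHm1.mono hm1).aestronglyMeasurable
      (c := |g 0| + |g 1 - g 0|) (ae_of_all μ fun ω => hHbound ω)
  have hmain : μ[fun ω => F ω * G ω|m1] =ᵐ[μ] fun ω => H ω * (μ[F|m1]) ω := by
    calc μ[fun ω => F ω * G ω|m1]
        =ᵐ[μ] μ[μ[fun ω => F ω * G ω|m2]|m1] := (condExp_condExp_of_le hm12 hm2).symm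
      _ =ᵐ[μ] μ[fun ω => H ω * (μ[F|m2]) ω|m1] := by
          refine condExp_congr_ae ?_
          have h1 := hunconf f g hf hg ⟨Cf, hCf⟩ ⟨Cg, hCg⟩
          filter_upwards [h1, hcondG2] with ω h1ω h2ω
          rw [h1ω]
          rw [h2ω, mul_comm]
      _ =ᵐ[μ] fun ω => H ω * (μ[μ[F|m2]|m1]) ω := by
          have := condExp_mul_of_stronglyMeasurable_left (μ := μ) (m := m1) hHm1
            (g := μ[F|m2]) (by simpa [Pi.mul_def] using hcondF2int) integrable_condExp
          simpa [Pi.mul_def] using this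
      _ =ᵐ[μ] fun ω => H ω * (μ[F|m1]) ω := by
          filter_upwards [condExp_condExp_of_le hm12 hm2 (f := F)] with ω hω
          rw [hω]
  calc μ[fun ω => F ω * G ω|m1] =ᵐ[μ] fun ω => H ω * (μ[F|m1]) ω := hmain
    _ =ᵐ[μ] fun ω => (μ[F|m1]) ω * (μ[G|m1]) ω := by
        filter_upwards [hcondG1] with ω hω
        rw [hω, mul_comm]
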